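/- Let s_0 be a state and for i = 1, …, n let α_i be a sequence of ground STRIPS actions applicable from s_{i−1} with s_i = succ(s_{i−1}, α_i), and let g_1, …, g_n be sets of atoms with g_i ⊆ s_i for each i. If for all i < j, every action a occurring in α_j satisfies del(a) ∩ g_i = ∅, then g_i ⊆ s_n for all i, and the concatenation α_1; …; α_n is a plan for (s_0, g_1 ∪ … ∪ g_n). (Goals achieved in sequence are retained, so the greedy goal-decomposition of a conjunctive goal yields a valid plan.) -/

import Mathlib

set_option maxHeartbeats 1000000


/-- A ground STRIPS action: a triple of sets of atoms. -/
structure GAct (α : Type*) where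
  pre : Set α
  add : Set α
  del : Set α

/-- The successor state of `s` under action `a` (when `a` is applicable, i.e. `a.pre ⊆ s`). -/
def gsucc {α : Type*} (s : Set α) (a : GAct α) : Set α :=
  (s \ a.del) ∪ a.add

/-- Final state after applying a sequence of actions. -/
def succList {α : Type*} : Set α → List (GAct α) → Set α
  | s, [] => s
  | s, a :: l => succList (gsucc s a) l

/-- The action sequence is applicable from `s`:
each action is applicable in the successively progressed state. -/
def AppList {α : Type*} : Set α → List (GAct α) → Prop
  | _, [] => True
  | s, a :: l => a.pre ⊆ s ∧ AppList (gsucc s a) l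

lemma succList_append {α : Type*} (l1 l2 : List (GAct α)) : ∀ s : Set α,
    succList s (l1 ++ l2) = succList (succList s l1) l2 := by
  induction l1 with
  | nil => intro s; rfl
  | cons a t ih => intro s; simp [succList, ih]

lemma AppList_append {α : Type*} (l1 l2 : List (GAct α)) : ∀ s : Set α,
    AppList s l1 → AppList (succList s l1) l2 → AppList s (l1 ++ l2) := by
  induction l1 with
  | nil => intro s _ h2; exact h2
  | cons a t ih =>
    intro s h1 h2
    exact ⟨h1.1, ih _ h1.2 h2⟩

lemma preserve {α : Type*} (G : Set α) (l : List (GAct α)) : ∀ s : Set α,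
    G ⊆ s → (∀ a ∈ l, a.del ∩ G = ∅) → G ⊆ succList s l := by
  induction l with
  | nil => intro s h _; exact h
  | cons a t ih =>
    intro s h hdel
    refine ih _ ?_ (fun a ha => hdel a (List.mem_cons_of_mem _ ha))
    intro x hx
    have hd := hdel a List.mem_cons_self
    left
    refine ⟨h hx, fun hxd => ?_⟩
    have : x ∈ a.del ∩ G := ⟨hxd, hx⟩
    rw [hd] at this
    exact this

lemma chain {α : Type*} : ∀ {n : ℕ} (s : Fin (n + 1) → Set α)
    (acts : Fin n → List (GAct α)),
    (∀ i : Fin n, AppList (s i.castSucc) (acts i)) →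
    (∀ i : Fin n, s i.succ = succList (s i.castSucc) (acts i)) →
    AppList (s 0) (List.ofFn acts).flatten ∧
      succList (s 0) (List.ofFn acts).flatten = s (Fin.last n) := by
  intro n
  induction n with
  | zero =>
    intro s acts _ _
    refine ⟨?_, ?_⟩
    · simp [AppList]
    · simp [succList]
  | succ n ih =>
    intro s acts happ hstep
    have hofn : (List.ofFn acts).flatten = acts 0 ++ (List.ofFn (fun i : Fin n => acts i.succ)).flatten := by
      rw [List.ofFn_succ]; rfl
    have h0 : (0 : Fin (n+1)).castSucc = (0 : Fin (n+2)) := rfl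
    have hs0 : succList (s 0) (acts 0) = s (Fin.succ 0) := (hstep 0).symm
    obtain ⟨ihA, ihS⟩ := ih (fun i => s i.succ) (fun i => acts i.succ)
      (fun i => happ i.succ) (fun i => hstep i.succ)
    rw [hofn]
    constructor
    · apply AppList_append
      · exact happ 0
      · rw [hs0]; exact ihA
    · rw [succList_append, hs0, ihS]
      rfl

theorem stmt14 {α : Type*} {n : ℕ} (s : Fin (n + 1) → Set α)
    (acts : Fin n → List (GAct α)) (g : Fin n → Set α)
    (happ : ∀ i : Fin n, AppList (s i.castSucc) (acts i))
    (hstep : ∀ i : Fin n, s i.succ = succList (s i.castSucc) (acts i))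
    (hg : ∀ i : Fin n, g i ⊆ s i.succ)
    (hdel : ∀ i j : Fin n, i < j → ∀ a ∈ acts j, a.del ∩ g i = ∅) :
    (∀ i : Fin n, g i ⊆ s (Fin.last n)) ∧
      AppList (s 0) (List.ofFn acts).flatten ∧
      (⋃ i : Fin n, g i) ⊆ succList (s 0) (List.ofFn acts).flatten := by
  obtain ⟨hA, hS⟩ := chain s acts happ hstep
  have hkey : ∀ i : Fin n, g i ⊆ s (Fin.last n) := by
    intro i
    have key : ∀ k : ℕ, (hk : k ≤ n) → i.val < k → g i ⊆ s ⟨k, by omega⟩ := by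
      intro k
      induction k with
      | zero => intro _ h; omega
      | succ k ihk =>
        intro hk hik
        rcases Nat.lt_or_ge i.val k with h | h
        · have hsub := ihk (by omega) h
          have hj : (⟨k, by omega⟩ : Fin n).succ = (⟨k+1, by omega⟩ : Fin (n+1)) := rfl
          have hc : (⟨k, by omega⟩ : Fin n).castSucc = (⟨k, by omega⟩ : Fin (n+1)) := rfl
          have := hstep ⟨k, by omega⟩
          rw [hj, hc] at this
          rw [this]
          exact preserve _ _ _ hsub (hdel i ⟨k, by omega⟩ h)
        · have : i.val = k := by omega
          have hj : i.succ = (⟨k+1, by omega⟩ : Fin (n+1)) := by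
            ext; simp [this]
          rw [← hj]
          exact hg i
    have hlast : (Fin.last n) = ⟨n, by omega⟩ := rfl
    rw [hlast]
    exact key n le_rfl i.isLt
  refine ⟨hkey, hA, ?_⟩
  rw [hS]
  exact Set.iUnion_subset hkey
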